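/- Let ν ≥ 0, α > -1. With p_{n+1,n}^α(x) = Σ_k a_{n+1,n}^α(k) x^(2n+1-k) the monic type-2 multiple orthogonal polynomial, the subleading coefficient is a_{n+1,n}^α(1) = -(2n+1)(α+2n+1)(α+2n+ν+1). -/

import Mathlib

open MeasureTheory Real Set

noncomputable def rho (ν x : ℝ) : ℝ :=
  ∫ t in Set.Ioi (0:ℝ), t ^ (ν - 1) * Real.exp (-t - x / t)

lemma intOn_rpow_exp {s b : ℝ} (hs : -1 < s) (hb : 0 < b) :
    IntegrableOn (fun x : ℝ => x ^ s * Real.exp (-(b * x))) (Ioi 0) := by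
  have h := integrableOn_rpow_mul_exp_neg_mul_rpow (p := 1) hs one_pos hb
  have : (fun x : ℝ => x ^ s * Real.exp (-b * x ^ (1:ℝ))) =
      fun x : ℝ => x ^ s * Real.exp (-(b * x)) := by
    funext x; rw [Real.rpow_one, neg_mul]
  rwa [this] at h

lemma int_rpow_exp {s b : ℝ} (hs : -1 < s) (hb : 0 < b) :
    ∫ x in Ioi (0:ℝ), x ^ s * Real.exp (-(b * x)) = (1/b) ^ (s+1) * Real.Gamma (s+1) := by
  have h := Real.integral_rpow_mul_exp_neg_mul_Ioi (a := s+1) (by linarith) hb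
  simpa [add_sub_cancel_right] using h

lemma rho_integrand_measurable (ν x : ℝ) :
    Measurable (fun t : ℝ => t ^ (ν - 1) * Real.exp (-t - x / t)) := by
  fun_prop

lemma rho_integrand_integrableOn {ν x : ℝ} (hν : 0 ≤ ν) (hx : 0 < x) :
    IntegrableOn (fun t : ℝ => t ^ (ν - 1) * Real.exp (-t - x / t)) (Ioi 0) := by
  have hmaj : IntegrableOn (fun t : ℝ => x⁻¹ * (t ^ ν * Real.exp (-(1 * t)))) (Ioi 0) :=
    (intOn_rpow_exp (by linarith) one_pos).const_mul _
  refine hmaj.mono' ((rho_integrand_measurable ν x).aestronglyMeasurable) ?_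
  filter_upwards [ae_restrict_mem measurableSet_Ioi] with t ht
  have ht : (0:ℝ) < t := ht
  have h1 : Real.exp (-t - x / t) = Real.exp (-t) * Real.exp (-(x/t)) := by
    rw [← Real.exp_add]; ring_nf
  have h2 : Real.exp (-(x/t)) ≤ t / x := by
    rw [Real.exp_neg]
    have hxt : 0 < x / t := div_pos hx ht
    have : x / t ≤ Real.exp (x / t) := (Real.add_one_le_exp _).trans' (by linarith)
    calc (Real.exp (x/t))⁻¹ ≤ (x/t)⁻¹ := by
          apply inv_anti₀ hxt this
      _ = t / x := by rw [inv_div]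
  have hnn : 0 ≤ t ^ (ν - 1) := Real.rpow_nonneg ht.le _
  rw [Real.norm_eq_abs, abs_of_nonneg (by positivity)]
  calc t ^ (ν - 1) * Real.exp (-t - x / t)
      = t ^ (ν-1) * Real.exp (-t) * Real.exp (-(x/t)) := by rw [h1]; ring
    _ ≤ t ^ (ν-1) * Real.exp (-t) * (t / x) := by
        apply mul_le_mul_of_nonneg_left h2 (by positivity)
    _ = x⁻¹ * (t ^ ν * Real.exp (-(1*t))) := by
        rw [show t ^ ν = t ^ (ν - 1) * t from by
          rw [show ν = ν - 1 + 1 from by ring, Real.rpow_add ht, Real.rpow_one]; ring_nf]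
        field_simp

lemma rho_nonneg (ν : ℝ) (x : ℝ) : 0 ≤ rho ν x := by
  apply setIntegral_nonneg measurableSet_Ioi
  intro t ht
  have : (0:ℝ) < t := ht
  positivity

lemma rho_stronglyMeasurable (ν : ℝ) : MeasureTheory.StronglyMeasurable (rho ν) := by
  have : Measurable (fun p : ℝ × ℝ => p.2 ^ (ν - 1) * Real.exp (-p.2 - p.1 / p.2)) := by
    fun_prop
  exact this.stronglyMeasurable.integral_prod_right'

lemma moment_lintegral (ν s : ℝ) (hν : 0 ≤ ν) (hs : -1 < s) :
    ∫⁻ x in Ioi (0:ℝ), ENNReal.ofReal (x ^ s * rho ν x)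
      = ENNReal.ofReal (Real.Gamma (s+1) * Real.Gamma (s+ν+1)) := by
  have hG1 : (0:ℝ) < Real.Gamma (s+1) := Real.Gamma_pos_of_pos (by linarith)
  have hmeas : Measurable (fun p : ℝ × ℝ =>
      ENNReal.ofReal (p.1 ^ s * (p.2 ^ (ν-1) * Real.exp (-p.2 - p.1 / p.2)))) := by fun_prop
  have step1 : ∫⁻ x in Ioi (0:ℝ), ENNReal.ofReal (x ^ s * rho ν x)
      = ∫⁻ x in Ioi (0:ℝ), ∫⁻ t in Ioi (0:ℝ),
          ENNReal.ofReal (x ^ s * (t ^ (ν-1) * Real.exp (-t - x / t))) := by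
    refine setLIntegral_congr_fun measurableSet_Ioi (fun x hx => ?_)
    have hx : (0:ℝ) < x := hx
    have hint := rho_integrand_integrableOn (ν := ν) (x := x) hν hx
    have hnn : 0 ≤ᵐ[volume.restrict (Ioi (0:ℝ))]
        fun t : ℝ => t ^ (ν-1) * Real.exp (-t - x / t) := by
      filter_upwards [ae_restrict_mem measurableSet_Ioi] with t ht
      have : (0:ℝ) < t := ht
      positivity
    rw [ENNReal.ofReal_mul (Real.rpow_nonneg hx.le _)]
    unfold rho
    rw [ofReal_integral_eq_lintegral_ofReal hint hnn,
      ← lintegral_const_mul _ (by fun_prop)]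
    refine lintegral_congr (fun t => ?_)
    rw [← ENNReal.ofReal_mul (Real.rpow_nonneg hx.le _)]
  have step2 : ∫⁻ x in Ioi (0:ℝ), ∫⁻ t in Ioi (0:ℝ),
          ENNReal.ofReal (x ^ s * (t ^ (ν-1) * Real.exp (-t - x / t)))
      = ∫⁻ t in Ioi (0:ℝ), ∫⁻ x in Ioi (0:ℝ),
          ENNReal.ofReal (x ^ s * (t ^ (ν-1) * Real.exp (-t - x / t))) :=
    lintegral_lintegral_swap hmeas.aemeasurable
  have step3 : ∀ t ∈ Ioi (0:ℝ), ∫⁻ x in Ioi (0:ℝ),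
          ENNReal.ofReal (x ^ s * (t ^ (ν-1) * Real.exp (-t - x / t)))
      = ENNReal.ofReal (Real.Gamma (s+1) * (t ^ (s+ν) * Real.exp (-(1 * t)))) := by
    intro t ht
    have ht : (0:ℝ) < t := ht
    have htinv : (0:ℝ) < t⁻¹ := inv_pos.2 ht
    have hnn : 0 ≤ᵐ[volume.restrict (Ioi (0:ℝ))]
        fun x : ℝ => x ^ s * Real.exp (-(t⁻¹ * x)) := by
      filter_upwards [ae_restrict_mem measurableSet_Ioi] with x hx
      have : (0:ℝ) < x := hx
      positivity
    calc ∫⁻ x in Ioi (0:ℝ), ENNReal.ofReal (x ^ s * (t ^ (ν-1) * Real.exp (-t - x / t)))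
        = ∫⁻ x in Ioi (0:ℝ), ENNReal.ofReal (t ^ (ν-1) * Real.exp (-t))
            * ENNReal.ofReal (x ^ s * Real.exp (-(t⁻¹ * x))) := by
          refine lintegral_congr (fun x => ?_)
          rw [← ENNReal.ofReal_mul (by positivity)]
          congr 1
          rw [show -t - x / t = (-t) + (-(t⁻¹ * x)) from by rw [div_eq_inv_mul]; ring,
            Real.exp_add]
          ring
      _ = ENNReal.ofReal (t ^ (ν-1) * Real.exp (-t))
            * ∫⁻ x in Ioi (0:ℝ), ENNReal.ofReal (x ^ s * Real.exp (-(t⁻¹ * x))) :=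
          lintegral_const_mul _ (by fun_prop)
      _ = ENNReal.ofReal (t ^ (ν-1) * Real.exp (-t))
            * ENNReal.ofReal ((1/t⁻¹) ^ (s+1) * Real.Gamma (s+1)) := by
          rw [← ofReal_integral_eq_lintegral_ofReal (intOn_rpow_exp hs htinv) hnn,
            int_rpow_exp hs htinv]
      _ = ENNReal.ofReal (Real.Gamma (s+1) * (t ^ (s+ν) * Real.exp (-(1 * t)))) := by
          rw [← ENNReal.ofReal_mul (by positivity)]
          congr 1
          rw [one_div, inv_inv,
            show t ^ (s+ν) = t ^ (ν-1) * t ^ (s+1) from by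
              rw [← Real.rpow_add ht]; congr 1; ring]
          ring_nf
  have hnn4 : 0 ≤ᵐ[volume.restrict (Ioi (0:ℝ))]
      fun t : ℝ => Real.Gamma (s+1) * (t ^ (s+ν) * Real.exp (-(1 * t))) := by
    filter_upwards [ae_restrict_mem measurableSet_Ioi] with t ht
    have : (0:ℝ) < t := ht
    exact mul_nonneg hG1.le (by positivity)
  rw [step1, step2, setLIntegral_congr_fun measurableSet_Ioi step3,
    ← ofReal_integral_eq_lintegral_ofReal ((intOn_rpow_exp (by linarith : (-1:ℝ) < s + ν) one_pos).const_mul _) hnn4,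
    MeasureTheory.integral_const_mul, int_rpow_exp (by linarith : (-1:ℝ) < s + ν) one_pos]
  norm_num

lemma moment (ν s : ℝ) (hν : 0 ≤ ν) (hs : -1 < s) :
    IntegrableOn (fun x : ℝ => x ^ s * rho ν x) (Ioi 0) ∧
    ∫ x in Ioi (0:ℝ), x ^ s * rho ν x = Real.Gamma (s+1) * Real.Gamma (s+ν+1) := by
  have hG1 : (0:ℝ) < Real.Gamma (s+1) := Real.Gamma_pos_of_pos (by linarith)
  have hG2 : (0:ℝ) < Real.Gamma (s+ν+1) := Real.Gamma_pos_of_pos (by linarith)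
  have hmeas : AEStronglyMeasurable (fun x : ℝ => x ^ s * rho ν x)
      (volume.restrict (Ioi (0:ℝ))) := by
    exact ((measurable_id.pow_const s |>.stronglyMeasurable).mul
      (rho_stronglyMeasurable ν)).aestronglyMeasurable
  have hnn : 0 ≤ᵐ[volume.restrict (Ioi (0:ℝ))] fun x : ℝ => x ^ s * rho ν x := by
    filter_upwards [ae_restrict_mem measurableSet_Ioi] with x hx
    have hx : (0:ℝ) < x := hx
    exact mul_nonneg (Real.rpow_nonneg hx.le _) (rho_nonneg ν x)
  have hfin : HasFiniteIntegral (fun x : ℝ => x ^ s * rho ν x)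
      (volume.restrict (Ioi (0:ℝ))) := by
    rw [hasFiniteIntegral_iff_ofReal hnn, moment_lintegral ν s hν hs]
    exact ENNReal.ofReal_lt_top
  refine ⟨⟨hmeas, hfin⟩, ?_⟩
  rw [integral_eq_lintegral_of_nonneg_ae hnn hmeas, moment_lintegral ν s hν hs,
    ENNReal.toReal_ofReal (by positivity)]

lemma moment_pow (ν α : ℝ) (hν : 0 ≤ ν) (hα : -1 < α) (j k : ℕ) :
    IntegrableOn (fun x : ℝ => x ^ j * (x ^ ((k:ℝ) + α) * rho ν x)) (Ioi 0) ∧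
    ∫ x in Ioi (0:ℝ), x ^ j * (x ^ ((k:ℝ) + α) * rho ν x)
      = Real.Gamma ((j:ℝ)+k+α+1) * Real.Gamma ((j:ℝ)+k+α+ν+1) := by
  have hs : (-1:ℝ) < (j:ℝ)+k+α := by
    have h1 : (0:ℝ) ≤ (j:ℝ) := Nat.cast_nonneg j
    have h2 : (0:ℝ) ≤ (k:ℝ) := Nat.cast_nonneg k
    linarith
  have h := moment ν ((j:ℝ)+k+α) hν hs
  have hfun : ∀ x ∈ Ioi (0:ℝ),
      x ^ ((j:ℝ)+k+α) * rho ν x = x ^ j * (x ^ ((k:ℝ) + α) * rho ν x) := by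
    intro x hx
    have hx : (0:ℝ) < x := hx
    rw [show (j:ℝ)+k+α = (j:ℝ) + ((k:ℝ)+α) from by ring, Real.rpow_add hx,
      Real.rpow_natCast, mul_assoc]
  constructor
  · exact h.1.congr_fun hfun measurableSet_Ioi
  · rw [← setIntegral_congr_fun measurableSet_Ioi hfun, h.2]

lemma expand (ν α : ℝ) (hν : 0 ≤ ν) (hα : -1 < α) (k : ℕ) (P : Polynomial ℝ) :
    ∫ x in Ioi (0:ℝ), P.eval x * x ^ ((k:ℝ)+α) * rho ν x
      = ∑ j ∈ Finset.range (P.natDegree + 1),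
          P.coeff j * (Real.Gamma ((j:ℝ)+k+α+1) * Real.Gamma ((j:ℝ)+k+α+ν+1)) := by
  have h1 : ∀ x : ℝ, P.eval x * x ^ ((k:ℝ)+α) * rho ν x
      = ∑ j ∈ Finset.range (P.natDegree + 1),
          P.coeff j * (x ^ j * (x ^ ((k:ℝ)+α) * rho ν x)) := by
    intro x
    rw [Polynomial.eval_eq_sum_range, Finset.sum_mul, Finset.sum_mul]
    exact Finset.sum_congr rfl (fun j _ => by ring)
  simp_rw [h1]
  rw [integral_finset_sum _ (fun j _ => ((moment_pow ν α hν hα j k).1.const_mul _))]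
  exact Finset.sum_congr rfl (fun j _ => by
    rw [MeasureTheory.integral_const_mul, (moment_pow ν α hν hα j k).2])

lemma Gamma_shift (x : ℝ) (hx : 0 < x) (k : ℕ) :
    Real.Gamma (x + k) = Real.Gamma x * ∏ i ∈ Finset.range k, (x + i) := by
  induction k with
  | zero => simp
  | succ k ih =>
    have hpos : (0:ℝ) < x + k := by
      have : (0:ℝ) ≤ (k:ℝ) := Nat.cast_nonneg k
      linarith
    rw [show x + ((k:ℕ)+1:ℕ) = (x + k) + 1 from by push_cast; ring,
      Real.Gamma_add_one hpos.ne', ih, Finset.prod_range_succ]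
    ring

open Polynomial in
noncomputable def qpoly (α ν : ℝ) (d : ℕ) : Polynomial ℝ :=
  (∏ i ∈ Finset.range (d/2), (X + C (α + i + 1))) *
  (∏ i ∈ Finset.range (d - d/2), (X + C (α + ν + i + 1)))

lemma qpoly_monic (α ν : ℝ) (d : ℕ) : (qpoly α ν d).Monic :=
  (Polynomial.monic_prod_of_monic _ _ fun i _ => Polynomial.monic_X_add_C _).mul
    (Polynomial.monic_prod_of_monic _ _ fun i _ => Polynomial.monic_X_add_C _)

lemma qpoly_natDegree (α ν : ℝ) (d : ℕ) : (qpoly α ν d).natDegree = d := by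
  have h1 : (∏ i ∈ Finset.range (d/2), (Polynomial.X + Polynomial.C (α + i + 1))).natDegree
      = d/2 := by
    rw [Polynomial.natDegree_prod_of_monic _ _ (fun i _ => Polynomial.monic_X_add_C _)]
    simp only [Polynomial.natDegree_X_add_C, Finset.sum_const, smul_eq_mul, mul_one,
      Finset.card_range]
  have h2 : (∏ i ∈ Finset.range (d - d/2),
      (Polynomial.X + Polynomial.C (α + ν + i + 1))).natDegree = d - d/2 := by
    rw [Polynomial.natDegree_prod_of_monic _ _ (fun i _ => Polynomial.monic_X_add_C _)]
    simp only [Polynomial.natDegree_X_add_C, Finset.sum_const, smul_eq_mul, mul_one,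
      Finset.card_range]
  rw [qpoly, Polynomial.Monic.natDegree_mul
    (Polynomial.monic_prod_of_monic _ _ fun i _ => Polynomial.monic_X_add_C _)
    (Polynomial.monic_prod_of_monic _ _ fun i _ => Polynomial.monic_X_add_C _), h1, h2]
  omega

lemma exists_comb (q : ℕ → Polynomial ℝ) (hq : ∀ d, (q d).Monic)
    (hdeg : ∀ d, (q d).natDegree = d) :
    ∀ k : ℕ, ∀ p : Polynomial ℝ, p.degree < (k : ℕ) →
      ∃ w : ℕ → ℝ, p = ∑ d ∈ Finset.range k, Polynomial.C (w d) * q d := by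
  intro k
  induction k with
  | zero =>
    intro p hp
    refine ⟨0, ?_⟩
    have : p = 0 := by
      rw [← Polynomial.degree_eq_bot]
      exact Nat.WithBot.lt_zero_iff.mp (by simpa using hp)
    simp [this]
  | succ k ih =>
    intro p hp
    by_cases h0 : p = 0
    · exact ⟨0, by simp [h0]⟩
    · set d := p.natDegree with hd
      have hdk : d < k + 1 := by
        rwa [Polynomial.degree_eq_natDegree h0, Nat.cast_lt] at hp
      have hlc : p.leadingCoeff ≠ 0 := Polynomial.leadingCoeff_ne_zero.mpr h0
      set p' := p - Polynomial.C p.leadingCoeff * q d with hp'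
      have hdegq : (Polynomial.C p.leadingCoeff * q d).degree = p.degree := by
        rw [Polynomial.degree_C_mul hlc, Polynomial.degree_eq_natDegree h0,
          Polynomial.degree_eq_natDegree (hq d).ne_zero, hdeg d]
      have hlcq : (Polynomial.C p.leadingCoeff * q d).leadingCoeff = p.leadingCoeff := by
        rw [Polynomial.leadingCoeff_mul, Polynomial.leadingCoeff_C, (hq d).leadingCoeff, mul_one]
      have hsub : p'.degree < p.degree := Polynomial.degree_sub_lt hdegq.symm h0 hlcq.symm
      have hlt : p'.degree < (k:ℕ) := by
        refine lt_of_lt_of_le hsub ?_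
        rw [Polynomial.degree_eq_natDegree h0, ← hd, Nat.cast_le]
        omega
      obtain ⟨w', hw'⟩ := ih p' hlt
      refine ⟨fun e => (if e ∈ Finset.range k then w' e else 0)
        + (if e = d then p.leadingCoeff else 0), ?_⟩
      have hpeq : p = p' + Polynomial.C p.leadingCoeff * q d := by rw [hp']; ring
      have hsum1 : ∑ e ∈ Finset.range (k+1),
          Polynomial.C (if e ∈ Finset.range k then w' e else 0) * q e
          = ∑ e ∈ Finset.range k, Polynomial.C (w' e) * q e := by
        rw [← Finset.sum_subset (Finset.range_subset_range.mpr (Nat.le_succ k))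
          (fun e _ hne => by rw [if_neg hne, map_zero, zero_mul])]
        exact Finset.sum_congr rfl (fun e he => by rw [if_pos he])
      have hsum2 : ∑ e ∈ Finset.range (k+1),
          Polynomial.C (if e = d then p.leadingCoeff else 0) * q e
          = Polynomial.C p.leadingCoeff * q d := by
        rw [Finset.sum_eq_single d (fun e _ hne => by rw [if_neg hne, map_zero, zero_mul])
          (fun hne => absurd (Finset.mem_range.mpr hdk) hne), if_pos rfl]
      calc p = p' + Polynomial.C p.leadingCoeff * q d := hpeq
        _ = ∑ e ∈ Finset.range (k+1), Polynomial.C ((if e ∈ Finset.range k then w' e else 0)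
              + (if e = d then p.leadingCoeff else 0)) * q e := by
            simp_rw [map_add, add_mul, Finset.sum_add_distrib, hsum1, hsum2, hw']

lemma prod_desc (m : ℕ) : ∏ i ∈ Finset.range m, ((m:ℝ) - (i:ℕ)) = Nat.factorial m := by
  induction m with
  | zero => simp
  | succ m ih =>
    rw [Finset.prod_range_succ']
    have h : ∀ i ∈ Finset.range m, (((m+1:ℕ)):ℝ) - ((i+1:ℕ):ℝ) = (m:ℝ) - (i:ℕ) := by
      intro i _; push_cast; ring
    rw [Finset.prod_congr rfl h, ih]
    push_cast [Nat.factorial_succ]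
    ring
lemma prod_desc' (m : ℕ) :
    ∏ i ∈ Finset.range m, (((m:ℕ):ℝ) + 1 - (i:ℕ)) = Nat.factorial (m+1) := by
  induction m with
  | zero => simp
  | succ m ih =>
    rw [Finset.prod_range_succ']
    have h : ∀ i ∈ Finset.range m, ((((m+1:ℕ)):ℝ) + 1 - ((i+1:ℕ):ℝ)) = (m:ℝ) + 1 - (i:ℕ) := by
      intro i _; push_cast; ring
    rw [Finset.prod_congr rfl h, ih]
    push_cast [Nat.factorial_succ]
    ring

noncomputable def K (ν z : ℝ) : ℝ :=
  (1/2) * (z/2) ^ ν * ∫ t in Set.Ioi (0:ℝ), Real.exp (-t - z^2 / (4*t)) * t ^ (-ν - 1)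


/-- `p` is the monic type-2 multiple orthogonal polynomial of multi-index `(n,m)`
for the weights `x^α ρ_ν` and `x^α ρ_{ν+1}` on `(0,∞)`. -/
def IsType2MOP (ν α : ℝ) (n m : ℕ) (p : Polynomial ℝ) : Prop :=
  p.Monic ∧ p.natDegree = n + m ∧
  (∀ k : ℕ, k < n → ∫ x in Set.Ioi (0:ℝ), p.eval x * x ^ ((k : ℝ) + α) * rho ν x = 0) ∧
  (∀ k : ℕ, k < m → ∫ x in Set.Ioi (0:ℝ), p.eval x * x ^ ((k : ℝ) + α) * rho (ν + 1) x = 0)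

theorem type2_np1n_subleading_coeff (ν α : ℝ) (hν : 0 ≤ ν) (hα : -1 < α) (n : ℕ)
    (P : Polynomial ℝ) (hP : IsType2MOP ν α (n + 1) n P) :
    P.coeff (2 * n) = -(2 * n + 1) * (α + 2 * n + 1) * (α + 2 * n + ν + 1) := by
  obtain ⟨hmon, hdeg, ho1, ho2⟩ := hP
  have hdeg' : P.natDegree = 2*n+1 := by rw [hdeg]; ring
  -- orthogonality in moment form, against the `qpoly` family
  have key : ∀ d ∈ Finset.range (2*n+1),
      ∑ j ∈ Finset.range (2*n+2), P.coeff j *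
        ((Real.Gamma ((j:ℝ)+α+1) * Real.Gamma ((j:ℝ)+α+ν+1)) * (qpoly α ν d).eval (j:ℝ)) = 0 := by
    intro d hd
    have hd : d < 2*n+1 := Finset.mem_range.mp hd
    have heval : ∀ j : ℕ,
        (Real.Gamma ((j:ℝ)+α+1) * Real.Gamma ((j:ℝ)+α+ν+1)) * (qpoly α ν d).eval (j:ℝ)
        = Real.Gamma ((j:ℝ)+α+1+((d/2:ℕ):ℝ)) * Real.Gamma ((j:ℝ)+α+ν+1+((d-d/2:ℕ):ℝ)) := by
      intro j
      have hj : (0:ℝ) ≤ (j:ℝ) := Nat.cast_nonneg j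
      have e1 : (qpoly α ν d).eval (j:ℝ)
          = (∏ i ∈ Finset.range (d/2), ((j:ℝ) + α + 1 + i))
            * ∏ i ∈ Finset.range (d - d/2), ((j:ℝ) + α + ν + 1 + i) := by
        rw [qpoly, Polynomial.eval_mul, Polynomial.eval_prod, Polynomial.eval_prod]
        congr 1 <;> exact Finset.prod_congr rfl fun i _ => by
          simp only [Polynomial.eval_add, Polynomial.eval_X, Polynomial.eval_C]; ring
      rw [Gamma_shift ((j:ℝ)+α+1) (by linarith) (d/2),
        Gamma_shift ((j:ℝ)+α+ν+1) (by linarith) (d - d/2), e1]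
      ring
    rcases Nat.even_or_odd d with he | ho
    · obtain ⟨k, hk⟩ := he
      have hk2 : d/2 = k := by omega
      have hkm : d - d/2 = k := by omega
      have h0 := ho1 k (by omega)
      rw [expand ν α hν hα k P, hdeg'] at h0
      rw [← h0]
      refine Finset.sum_congr rfl (fun j _ => ?_)
      rw [heval j, hkm, hk2,
        show (j:ℝ)+α+1+((k:ℕ):ℝ) = (j:ℝ)+k+α+1 from by push_cast; ring,
        show (j:ℝ)+α+ν+1+((k:ℕ):ℝ) = (j:ℝ)+k+α+ν+1 from by push_cast; ring]
    · obtain ⟨k, hk⟩ := ho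
      have hk2 : d/2 = k := by omega
      have hkm : d - d/2 = k+1 := by omega
      have h0 := ho2 k (by omega)
      rw [expand (ν+1) α (by linarith) hα k P, hdeg'] at h0
      rw [← h0]
      refine Finset.sum_congr rfl (fun j _ => ?_)
      rw [heval j, hkm, hk2,
        show (j:ℝ)+α+1+((k:ℕ):ℝ) = (j:ℝ)+k+α+1 from by push_cast; ring,
        show (j:ℝ)+α+ν+1+((k+1:ℕ):ℝ) = (j:ℝ)+k+α+(ν+1)+1 from by push_cast; ring]
  -- the dual polynomial
  set T : Polynomial ℝ := ∏ i ∈ Finset.range (2*n), (Polynomial.X - Polynomial.C (i:ℝ)) with hT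
  have hTmon : T.Monic :=
    Polynomial.monic_prod_of_monic _ _ fun i _ => Polynomial.monic_X_sub_C _
  have hTdeg : T.natDegree = 2*n := by
    rw [hT, Polynomial.natDegree_prod_of_monic _ _ (fun i _ => Polynomial.monic_X_sub_C _)]
    simp only [Polynomial.natDegree_X_sub_C, Finset.sum_const, smul_eq_mul, mul_one,
      Finset.card_range]
  have hTdegree : T.degree < ((2*n+1:ℕ) : WithBot ℕ) := by
    rw [Polynomial.degree_eq_natDegree hTmon.ne_zero, hTdeg]
    exact_mod_cast Nat.lt_succ_self _
  obtain ⟨w, hw⟩ :=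
    exists_comb (qpoly α ν) (qpoly_monic α ν) (qpoly_natDegree α ν) (2*n+1) T hTdegree
  have hTeval : ∀ r : ℝ, T.eval r = ∏ i ∈ Finset.range (2*n), (r - (i:ℕ)) := by
    intro r
    rw [hT, Polynomial.eval_prod]
    exact Finset.prod_congr rfl fun i _ => by
      simp only [Polynomial.eval_sub, Polynomial.eval_X, Polynomial.eval_C]
  -- the master vanishing identity
  have main : ∑ j ∈ Finset.range (2*n+2), P.coeff j *
      ((Real.Gamma ((j:ℝ)+α+1) * Real.Gamma ((j:ℝ)+α+ν+1)) * T.eval (j:ℝ)) = 0 := by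
    have hTe : ∀ j : ℕ, T.eval (j:ℝ)
        = ∑ d ∈ Finset.range (2*n+1), w d * (qpoly α ν d).eval (j:ℝ) := by
      intro j
      rw [hw, Polynomial.eval_finset_sum]
      exact Finset.sum_congr rfl fun d _ => by
        rw [Polynomial.eval_mul, Polynomial.eval_C]
    calc ∑ j ∈ Finset.range (2*n+2), P.coeff j *
          ((Real.Gamma ((j:ℝ)+α+1) * Real.Gamma ((j:ℝ)+α+ν+1)) * T.eval (j:ℝ))
        = ∑ j ∈ Finset.range (2*n+2), ∑ d ∈ Finset.range (2*n+1),
            w d * (P.coeff j * ((Real.Gamma ((j:ℝ)+α+1) * Real.Gamma ((j:ℝ)+α+ν+1))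
              * (qpoly α ν d).eval (j:ℝ))) := by
          refine Finset.sum_congr rfl fun j _ => ?_
          rw [hTe j, Finset.mul_sum, Finset.mul_sum]
          exact Finset.sum_congr rfl fun d _ => by ring
      _ = ∑ d ∈ Finset.range (2*n+1), w d * ∑ j ∈ Finset.range (2*n+2), P.coeff j *
            ((Real.Gamma ((j:ℝ)+α+1) * Real.Gamma ((j:ℝ)+α+ν+1))
              * (qpoly α ν d).eval (j:ℝ)) := by
          rw [Finset.sum_comm]
          exact Finset.sum_congr rfl fun d _ => by rw [Finset.mul_sum]
      _ = 0 := Finset.sum_eq_zero fun d hd => by rw [key d hd, mul_zero]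
  rw [Finset.sum_range_succ, Finset.sum_range_succ] at main
  have hzero : ∑ j ∈ Finset.range (2*n), P.coeff j *
      ((Real.Gamma ((j:ℝ)+α+1) * Real.Gamma ((j:ℝ)+α+ν+1)) * T.eval (j:ℝ)) = 0 := by
    refine Finset.sum_eq_zero fun j hj => ?_
    have hTe0 : T.eval ((j:ℕ):ℝ) = 0 := by
      rw [hTeval]
      exact Finset.prod_eq_zero hj (sub_self _)
    rw [hTe0, mul_zero, mul_zero]
  rw [hzero, zero_add] at main
  have hfac1 : T.eval ((2*n:ℕ):ℝ) = Nat.factorial (2*n) := by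
    rw [hTeval]; exact prod_desc (2*n)
  have hfac2 : T.eval ((2*n+1:ℕ):ℝ) = Nat.factorial (2*n+1) := by
    rw [hTeval]
    rw [show ((2*n+1:ℕ):ℝ) = ((2*n:ℕ):ℝ) + 1 from by push_cast; ring]
    exact prod_desc' (2*n)
  have hlead : P.coeff (2*n+1) = 1 := by
    have h := hmon.coeff_natDegree
    rwa [hdeg'] at h
  rw [hfac1, hfac2, hlead, one_mul] at main
  set A := Real.Gamma (((2*n:ℕ):ℝ)+α+1) with hA
  set B := Real.Gamma (((2*n:ℕ):ℝ)+α+ν+1) with hB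
  have hcast : (0:ℝ) ≤ ((2*n:ℕ):ℝ) := Nat.cast_nonneg _
  have hApos : 0 < A := Real.Gamma_pos_of_pos (by linarith)
  have hBpos : 0 < B := Real.Gamma_pos_of_pos (by linarith)
  have hGA : Real.Gamma (((2*n+1:ℕ):ℝ)+α+1) = (((2*n:ℕ):ℝ)+α+1) * A := by
    rw [show ((2*n+1:ℕ):ℝ)+α+1 = (((2*n:ℕ):ℝ)+α+1)+1 from by push_cast; ring,
      Real.Gamma_add_one (by intro h; linarith [hcast])]
  have hGB : Real.Gamma (((2*n+1:ℕ):ℝ)+α+ν+1) = (((2*n:ℕ):ℝ)+α+ν+1) * B := by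
    rw [show ((2*n+1:ℕ):ℝ)+α+ν+1 = (((2*n:ℕ):ℝ)+α+ν+1)+1 from by push_cast; ring,
      Real.Gamma_add_one (by intro h; linarith [hcast])]
  rw [hGA, hGB] at main
  have hfacpos : (0:ℝ) < (Nat.factorial (2*n) : ℝ) := by
    exact_mod_cast Nat.factorial_pos (2*n)
  have hfaccast : ((Nat.factorial (2*n+1) : ℕ) : ℝ)
      = (((2*n:ℕ):ℝ)+1) * (Nat.factorial (2*n) : ℝ) := by
    push_cast [Nat.factorial_succ]
    ring
  rw [hfaccast] at main
  have hkey : (P.coeff (2*n) + (((2*n:ℕ):ℝ)+1) * ((((2*n:ℕ):ℝ)+α+1)) * ((((2*n:ℕ):ℝ)+α+ν+1)))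
      * (A * B * (Nat.factorial (2*n) : ℝ)) = 0 := by
    linear_combination main
  rcases mul_eq_zero.mp hkey with h | h
  · have : P.coeff (2*n) = -((((2*n:ℕ):ℝ)+1) * ((((2*n:ℕ):ℝ)+α+1)) * ((((2*n:ℕ):ℝ)+α+ν+1))) := by
      linarith
    rw [this]
    push_cast
    ring
  · exfalso
    have : 0 < A * B * (Nat.factorial (2*n) : ℝ) := by positivity
    linarith
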